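/- Let G be a compact Lie group with Lie algebra 𝔤. There exists a neighborhood U of 0 in 𝔤 such that for all α, β ∈ U, if exp(α) and exp(β) commute in G, then [α, β] = 0. -/

import Mathlib

open NormedSpace

section Aux

variable {𝔸 : Type*} [NormedRing 𝔸] [NormedAlgebra ℝ 𝔸] [CompleteSpace 𝔸] [NormOneClass 𝔸]

lemma stmt12_norm_exp_le (x : 𝔸) : ‖exp x‖ ≤ Real.exp ‖x‖ := by
  rw [exp_eq_tsum ℝ]
  have h1 := norm_expSeries_summable' (𝕂 := ℝ) x
  refine (norm_tsum_le_tsum_norm h1).trans ?_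
  rw [Real.exp_eq_exp_ℝ, exp_eq_tsum_div]
  refine Summable.tsum_le_tsum (fun k => ?_) h1 (Real.summable_pow_div_factorial _)
  rw [norm_smul, norm_inv, Real.norm_natCast, div_eq_inv_mul]
  gcongr
  exact norm_pow_le x k

lemma stmt12_key :
    ∃ U ∈ nhds (0 : 𝔸), ∀ α ∈ U, ∀ β ∈ U,
      exp α * exp β = exp β * exp α → α * β - β * α = 0 := by
  -- local injectivity of `exp` near `0`
  have hd : HasStrictFDerivAt (exp : 𝔸 → 𝔸)
      ((ContinuousLinearEquiv.refl ℝ 𝔸 : 𝔸 ≃L[ℝ] 𝔸) : 𝔸 →L[ℝ] 𝔸) (0 : 𝔸) := by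
    exact hasStrictFDerivAt_exp_zero (𝕂 := ℝ) (𝔸 := 𝔸)
  set e := hd.toOpenPartialHomeomorph (exp : 𝔸 → 𝔸) with he
  have hsource : e.source ∈ nhds (0 : 𝔸) :=
    e.open_source.mem_nhds hd.mem_toOpenPartialHomeomorph_source
  have hinj : Set.InjOn (exp : 𝔸 → 𝔸) e.source := by
    have h := e.injOn
    rwa [he, hd.toOpenPartialHomeomorph_coe] at h
  obtain ⟨ε, hε0, hball⟩ := Metric.mem_nhds_iff.mp hsource
  set δ := min 1 (ε / 10) with hδ
  have hδ0 : 0 < δ := lt_min one_pos (by positivity)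
  have hδ1 : δ ≤ 1 := min_le_left _ _
  have hδε : δ ≤ ε / 10 := min_le_right _ _
  have hmemδ : ∀ x : 𝔸, ‖x‖ < δ → x ∈ e.source := by
    intro x hx
    apply hball
    rw [Metric.mem_ball, dist_zero_right]
    calc ‖x‖ < δ := hx
    _ ≤ ε / 10 := hδε
    _ < ε := by linarith
  have hexp3 : ∀ x : 𝔸, ‖x‖ < δ → ‖exp x‖ ≤ 3 := by
    intro x hx
    calc ‖exp x‖ ≤ Real.exp ‖x‖ := stmt12_norm_exp_le x
    _ ≤ Real.exp 1 := Real.exp_le_exp.2 (le_of_lt (hx.trans_le hδ1))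
    _ ≤ 3 := by
        have := Real.exp_one_lt_d9
        linarith
  have hconj_mem : ∀ x y : 𝔸, ‖x‖ < δ → ‖y‖ < δ → exp x * y * exp (-x) ∈ e.source := by
    intro x y hx hy
    apply hball
    rw [Metric.mem_ball, dist_zero_right]
    have hnx : ‖(-x : 𝔸)‖ < δ := by rwa [norm_neg]
    have h3 : ‖exp x‖ ≤ 3 := hexp3 x hx
    have h3' : ‖exp (-x)‖ ≤ 3 := hexp3 (-x) hnx
    have hy0 : (0 : ℝ) ≤ ‖y‖ := norm_nonneg y
    have he1 : (0 : ℝ) ≤ ‖exp x‖ := norm_nonneg _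
    have he2 : (0 : ℝ) ≤ ‖exp (-x)‖ := norm_nonneg _
    calc ‖exp x * y * exp (-x)‖ ≤ ‖exp x * y‖ * ‖exp (-x)‖ := norm_mul_le _ _
    _ ≤ ‖exp x‖ * ‖y‖ * ‖exp (-x)‖ := by
        gcongr
        exact norm_mul_le _ _
    _ ≤ 3 * ‖y‖ * 3 := by gcongr
    _ < 3 * δ * 3 := by nlinarith
    _ ≤ 3 * (ε / 10) * 3 := by nlinarith
    _ < ε := by linarith
  -- key step: commuting exponentials near `0`
  have key : ∀ x y : 𝔸, ‖x‖ < δ → ‖y‖ < δ → exp x * exp y = exp y * exp x →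
      exp x * y = y * exp x := by
    intro x y hx hy hc
    letI : NormedAlgebra ℚ 𝔸 := NormedAlgebra.restrictScalars ℚ ℝ 𝔸
    obtain ⟨u, hu⟩ := isUnit_exp x
    have hui : (↑u⁻¹ : 𝔸) = exp (-x) := by
      rw [← Ring.inverse_unit, hu, Ring.inverse_exp]
    have hconj : exp (↑u * y * ↑u⁻¹) = exp y := by
      rw [exp_units_conj]
      have h1 : (↑u : 𝔸) * exp y = exp y * ↑u := by rw [hu]; exact hc
      rw [h1, Units.mul_inv_cancel_right]
    have hmem1 : (↑u : 𝔸) * y * ↑u⁻¹ ∈ e.source := by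
      rw [hu, hui]; exact hconj_mem x y hx hy
    have hmem2 : y ∈ e.source := hmemδ y hy
    have h2 : (↑u : 𝔸) * y * ↑u⁻¹ = y := hinj hmem1 hmem2 hconj
    have h3 : (↑u : 𝔸) * y = y * ↑u := by
      have h4 := congrArg (fun z : 𝔸 => z * (↑u : 𝔸)) h2
      simpa [Units.inv_mul_cancel_right] using h4
    rw [hu] at h3
    exact h3
  refine ⟨Metric.ball (0 : 𝔸) δ, Metric.ball_mem_nhds 0 hδ0, ?_⟩
  intro α hα β hβ hcomm
  have hα' : ‖α‖ < δ := by rwa [mem_ball_zero_iff] at hα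
  have hβ' : ‖β‖ < δ := by rwa [mem_ball_zero_iff] at hβ
  have h1 : exp α * β = β * exp α := key α β hα' hβ' hcomm
  have hs : ∀ s : ℝ, s ∈ Set.Ioo (-1 : ℝ) 1 → exp (s • β) * α = α * exp (s • β) := by
    intro s hsmem
    have hsβ : ‖s • β‖ < δ := by
      rw [norm_smul]
      calc ‖s‖ * ‖β‖ ≤ 1 * ‖β‖ := by
            gcongr
            rw [Real.norm_eq_abs]
            exact abs_le.2 ⟨hsmem.1.le, hsmem.2.le⟩
      _ = ‖β‖ := one_mul _
      _ < δ := hβ'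
    refine key (s • β) α hsβ hα' ?_
    have hc : Commute (exp α) β := h1
    exact ((hc.smul_right s).exp_right).symm.eq
  have hf : HasDerivAt (fun s : ℝ => exp (s • β) * α) (exp ((0 : ℝ) • β) * β * α) 0 :=
    (hasDerivAt_exp_smul_const β (0 : ℝ)).mul_const α
  have hg : HasDerivAt (fun s : ℝ => α * exp (s • β)) (α * (exp ((0 : ℝ) • β) * β)) 0 :=
    (hasDerivAt_exp_smul_const β (0 : ℝ)).const_mul α
  have heq : (fun s : ℝ => α * exp (s • β)) =ᶠ[nhds (0 : ℝ)]
      (fun s : ℝ => exp (s • β) * α) := by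
    filter_upwards [Ioo_mem_nhds (by norm_num : (-1 : ℝ) < 0) one_pos] with s hs'
    exact (hs s hs').symm
  have hf' : HasDerivAt (fun s : ℝ => α * exp (s • β)) (exp ((0 : ℝ) • β) * β * α) 0 :=
    hf.congr_of_eventuallyEq heq
  have h2 := hf'.unique hg
  rw [zero_smul, exp_zero, one_mul] at h2
  exact sub_eq_zero_of_eq h2.symm

end Aux

/-- Let `G` be a compact (matrix) Lie group with Lie algebra `𝔤`.  There is a neighborhood
`U` of `0` in the ambient matrix space such that for all `α, β ∈ U` belonging to the Lie
algebra of `G` (i.e. whose one-parameter exponential subgroups lie in `G`), if `exp α` and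
`exp β` commute then `[α, β] = α * β - β * α = 0`. -/
theorem stmt12 (n : ℕ) (G : Subgroup (Matrix.GeneralLinearGroup (Fin n) ℝ))
    (hG : IsCompact ((G : Set (Matrix.GeneralLinearGroup (Fin n) ℝ)))) :
    ∃ U ∈ nhds (0 : Matrix (Fin n) (Fin n) ℝ), ∀ α ∈ U, ∀ β ∈ U,
      (∀ t : ℝ, ∃ g ∈ G, ((g : Matrix.GeneralLinearGroup (Fin n) ℝ) :
          Matrix (Fin n) (Fin n) ℝ) = exp (t • α)) →
      (∀ t : ℝ, ∃ g ∈ G, ((g : Matrix.GeneralLinearGroup (Fin n) ℝ) :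
          Matrix (Fin n) (Fin n) ℝ) = exp (t • β)) →
      exp α * exp β = exp β * exp α →
      α * β - β * α = 0 := by
  obtain rfl | hn := Nat.eq_zero_or_pos n
  · exact ⟨Set.univ, Filter.univ_mem, fun α _ β _ _ _ _ => Subsingleton.elim _ _⟩
  haveI : Nonempty (Fin n) := ⟨⟨0, hn⟩⟩
  letI : SeminormedRing (Matrix (Fin n) (Fin n) ℝ) := Matrix.linftyOpSemiNormedRing
  letI : NormedRing (Matrix (Fin n) (Fin n) ℝ) := Matrix.linftyOpNormedRing
  letI : NormedAlgebra ℝ (Matrix (Fin n) (Fin n) ℝ) := Matrix.linftyOpNormedAlgebra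
  obtain ⟨U, hU, hmain⟩ := stmt12_key (𝔸 := Matrix (Fin n) (Fin n) ℝ)
  exact ⟨U, hU, fun α hα β hβ _ _ hcomm => hmain α hα β hβ hcomm⟩
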